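/- Let M ≥ 3 and let A be the inverse of the M×M Vandermonde matrix V with V_{j,n} = j^(n-1). Then row M-2 of A satisfies A_{M-2,n} = (-1)^(M+n)/((n-1)!(M-n)!) * ( (M-1)M(M+1)(3M+2)/24 - n·M(M+1)/2 + n^2 ) for n = 1,…,M. -/

import Mathlib

open Polynomial Finset

namespace VdmAux

noncomputable def P (n : ℕ) : Polynomial ℚ := ∏ j ∈ Finset.range n, (X - C ((j : ℚ) + 1))

lemma P_monic (n : ℕ) : (P n).Monic :=
  monic_prod_of_monic _ _ fun _ _ => monic_X_sub_C _

lemma P_natDegree (n : ℕ) : (P n).natDegree = n := by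
  rw [P, natDegree_prod_of_monic _ _ fun _ _ => monic_X_sub_C _]
  simp only [Polynomial.natDegree_X_sub_C]
  simp

lemma P_coeff_top (n : ℕ) : (P n).coeff n = 1 := by
  have := (P_monic n).coeff_natDegree
  rwa [P_natDegree] at this

lemma P_succ (n : ℕ) : P (n + 1) = P n * (X - C ((n : ℚ) + 1)) := by
  rw [P, P, prod_range_succ]

lemma P_coeff_1 (n : ℕ) : (P (n + 1)).coeff n = -(((n : ℚ) + 1) * ((n : ℚ) + 2) / 2) := by
  induction n with
  | zero =>
      simp [P, prod_range_one]
  | succ n ih =>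
      rw [P_succ, coeff_mul_X_sub_C, ih, P_coeff_top]
      push_cast
      ring

lemma P_coeff_2 (n : ℕ) :
    (P (n + 2)).coeff n =
      ((n : ℚ) + 1) * ((n : ℚ) + 2) * ((n : ℚ) + 3) * (3 * (n : ℚ) + 8) / 24 := by
  induction n with
  | zero =>
      rw [show (2 : ℕ) = 0 + 1 + 1 by rfl, P_succ, mul_coeff_zero]
      have h0 : (P (0 + 1)).coeff 0 = -1 := by
        rw [P_coeff_1]; norm_num
      rw [h0]
      norm_num
  | succ n ih =>
      have h1 : (P (n + 2)).coeff (n + 1) = -(((n : ℚ) + 2) * ((n : ℚ) + 3) / 2) := by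
        have := P_coeff_1 (n + 1); push_cast at this ⊢; linarith [this]
      rw [show n + 1 + 2 = (n + 2) + 1 by ring, P_succ, coeff_mul_X_sub_C, ih, h1]
      push_cast
      ring

lemma prod_cast_factorial (k : ℕ) : ∏ j ∈ range k, ((j : ℚ) + 1) = k.factorial := by
  induction k with
  | zero => simp
  | succ k ih =>
      rw [prod_range_succ, ih, Nat.factorial_succ]
      push_cast
      ring

lemma prodA (k : ℕ) : ∏ j ∈ range k, ((k : ℚ) - j) = k.factorial := by
  rw [← Finset.prod_range_reflect]
  rw [← prod_cast_factorial k]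
  apply prod_congr rfl
  intro j hj
  rw [mem_range] at hj
  have : ((k - 1 - j : ℕ) : ℚ) = (k : ℚ) - 1 - j := by
    push_cast [Nat.cast_sub (by omega : j ≤ k - 1), Nat.cast_sub (by omega : 1 ≤ k)]
    ring
  rw [this]; ring

lemma prodB (k m : ℕ) :
    ∏ j ∈ Ico (k + 1) (k + 1 + m), ((k : ℚ) - j) = (-1) ^ m * m.factorial := by
  rw [Finset.prod_Ico_eq_prod_range]
  have hc : k + 1 + m - (k + 1) = m := by omega
  rw [hc]
  have : ∀ j ∈ range m, (k : ℚ) - ((k + 1 + j : ℕ) : ℚ) = (-1) * ((j : ℚ) + 1) := by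
    intro j _; push_cast; ring
  rw [prod_congr rfl this, prod_mul_distrib, prod_const, prod_cast_factorial, card_range]

lemma prod_sub (M k : ℕ) (hk : k < M) :
    ∏ j ∈ (Finset.range M).erase k, ((k : ℚ) - j) =
      (-1) ^ (M - 1 - k) * k.factorial * (M - 1 - k).factorial := by
  obtain ⟨m, rfl⟩ : ∃ m, M = k + 1 + m := ⟨M - 1 - k, by omega⟩
  have hset : (Finset.range (k + 1 + m)).erase k = range k ∪ Ico (k + 1) (k + 1 + m) := by
    ext x; simp only [mem_erase, mem_range, mem_union, mem_Ico]; omega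
  have hdisj : Disjoint (range k) (Ico (k + 1) (k + 1 + m)) := by
    simp only [disjoint_left, mem_range, mem_Ico]; omega
  rw [hset, prod_union hdisj, prodA, prodB]
  have : k + 1 + m - 1 - k = m := by omega
  rw [this]; ring

lemma fin_erase_prod (M : ℕ) (k : Fin M) (f : ℕ → ℚ) :
    ∏ j ∈ (Finset.univ : Finset (Fin M)).erase k, f (j : ℕ) =
      ∏ j ∈ (Finset.range M).erase (k : ℕ), f j := by
  apply Finset.prod_bij (fun (j : Fin M) _ => (j : ℕ))
  · intro a ha
    rw [Finset.mem_erase] at ha ⊢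
    exact ⟨fun h => ha.1 (Fin.ext h), Finset.mem_range.mpr a.isLt⟩
  · intro a _ b _ hab
    exact Fin.ext hab
  · intro b hb
    rw [Finset.mem_erase, Finset.mem_range] at hb
    exact ⟨⟨b, hb.2⟩, Finset.mem_erase.mpr ⟨fun h => hb.1 (congrArg Fin.val h), Finset.mem_univ _⟩, rfl⟩
  · intro a _
    rfl

end VdmAux

open VdmAux

/-- Row `M-2` of the inverse of the Vandermonde matrix `V_{j,n} = j^(n-1)`,
`j, n ∈ {1,…,M}` (indexed here by `Fin M`): with `n = k+1`,
`A_{M-2,n} = (-1)^(M+n)/((n-1)!(M-n)!) *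
  ((M-1)M(M+1)(3M+2)/24 - n·M(M+1)/2 + n²)`. -/
theorem inverse_vandermonde_row_M_sub_two (M : ℕ) (hM : 3 ≤ M) (k : Fin M) :
    (Matrix.of fun j n : Fin M => ((j : ℚ) + 1) ^ (n : ℕ))⁻¹
        ⟨M - 3, by omega⟩ k =
      (-1 : ℚ) ^ (M + ((k : ℕ) + 1)) /
          ((k : ℕ).factorial * (M - ((k : ℕ) + 1)).factorial) *
        (((M : ℚ) - 1) * (M : ℚ) * ((M : ℚ) + 1) * (3 * (M : ℚ) + 2) / 24
          - ((k : ℕ) + 1) * (M : ℚ) * ((M : ℚ) + 1) / 2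
          + (((k : ℕ) : ℚ) + 1) ^ 2) := by
  classical
  set v : Fin M → ℚ := fun j => (j : ℚ) + 1 with hv
  have hinj : Set.InjOn v (Finset.univ : Finset (Fin M)) := by
    intro a _ b _ hab
    have : ((a : ℕ) : ℚ) = ((b : ℕ) : ℚ) := by
      simpa [hv] using hab
    exact Fin.ext (Nat.cast_injective this)
  have hcard : (Finset.univ : Finset (Fin M)).card = M := Finset.card_fin M
  set B : Matrix (Fin M) (Fin M) ℚ :=
    Matrix.of fun r n : Fin M => (Lagrange.basis Finset.univ v n).coeff (r : ℕ) with hB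
  have hVB : (Matrix.of fun j n : Fin M => ((j : ℚ) + 1) ^ (n : ℕ)) * B = 1 := by
    ext j n
    rw [Matrix.mul_apply]
    have hdeg : (Lagrange.basis Finset.univ v n).natDegree < M := by
      rw [Lagrange.natDegree_basis hinj (Finset.mem_univ n), hcard]
      omega
    have key : ∑ r : Fin M, ((j : ℚ) + 1) ^ (r : ℕ) *
          (Lagrange.basis Finset.univ v n).coeff (r : ℕ) =
        (Lagrange.basis Finset.univ v n).eval (v j) := by
      rw [Fin.sum_univ_eq_sum_range
        (fun i => ((j : ℚ) + 1) ^ i * (Lagrange.basis Finset.univ v n).coeff i),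
        Polynomial.eval_eq_sum_range' hdeg]
      exact Finset.sum_congr rfl fun i _ => mul_comm _ _
    simp only [Matrix.of_apply, hB]
    rw [key]
    by_cases hjn : j = n
    · subst hjn
      rw [Lagrange.eval_basis_self hinj (Finset.mem_univ j), Matrix.one_apply_eq]
    · rw [Lagrange.eval_basis_of_ne (Ne.symm hjn) (Finset.mem_univ j),
        Matrix.one_apply_ne hjn]
  have hInv := Matrix.inv_eq_right_inv hVB
  rw [hInv]
  -- now compute the coefficient
  obtain ⟨t, rfl⟩ : ∃ t, M = t + 3 := ⟨M - 3, by omega⟩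
  have hkM : (k : ℕ) < t + 3 := k.isLt
  simp only [hB, Matrix.of_apply]
  -- the entry is `(Lagrange.basis univ v k).coeff (t + 3 - 3)` i.e. `coeff t`
  rw [show t + 3 - 3 = t by omega]
  set N : Polynomial ℚ :=
    Lagrange.nodal ((Finset.univ : Finset (Fin (t + 3))).erase k) v with hN
  have hW : Lagrange.nodal (Finset.univ : Finset (Fin (t + 3))) v = P (t + 3) := by
    rw [Lagrange.nodal, P, Fin.prod_univ_eq_prod_range (fun i => X - C ((i : ℚ) + 1))]
  have hWN : P (t + 3) = N * (X - C (v k)) := by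
    rw [← hW, Lagrange.nodal_eq_mul_nodal_erase (Finset.mem_univ k), mul_comm, hN]
  have hNdeg : N.natDegree = t + 2 := by
    rw [hN, Lagrange.natDegree_nodal, Finset.card_erase_of_mem (Finset.mem_univ k), hcard]
    omega
  have hN2 : N.coeff (t + 2) = 1 := by
    have := (Lagrange.nodal_monic
      (s := (Finset.univ : Finset (Fin (t + 3))).erase k) (v := v)).coeff_natDegree
    rwa [← hN, hNdeg] at this
  have h1 : N.coeff (t + 1) =
      -(((t : ℚ) + 3) * ((t : ℚ) + 4) / 2) + ((k : ℕ) + 1 : ℚ) := by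
    have hc := P_coeff_1 (t + 2)
    rw [hWN, Polynomial.coeff_mul_X_sub_C, hN2] at hc
    have hvk : v k = ((k : ℕ) : ℚ) + 1 := rfl
    rw [hvk] at hc
    push_cast at hc ⊢
    linarith
  have h0 : N.coeff t =
      ((t : ℚ) + 2) * ((t : ℚ) + 3) * ((t : ℚ) + 4) * (3 * (t : ℚ) + 11) / 24
        + N.coeff (t + 1) * (((k : ℕ) : ℚ) + 1) := by
    have hc := P_coeff_2 (t + 1)
    rw [hWN, Polynomial.coeff_mul_X_sub_C] at hc
    have hvk : v k = ((k : ℕ) : ℚ) + 1 := rfl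
    rw [hvk] at hc
    push_cast at hc ⊢
    linarith
  have hbasis : Lagrange.basis Finset.univ v k =
      C (Lagrange.nodalWeight Finset.univ v k) * N := by
    rw [Lagrange.basis_eq_prod_sub_inv_mul_nodal_div (Finset.mem_univ k),
      ← Lagrange.nodal_erase_eq_nodal_div (Finset.mem_univ k), hN]
  -- compute the nodal weight
  have hwprod : ∏ j ∈ (Finset.univ : Finset (Fin (t + 3))).erase k, (v k - v j) =
      (-1 : ℚ) ^ (t + 2 - (k : ℕ)) * (k : ℕ).factorial * (t + 2 - (k : ℕ)).factorial := by
    have hfn : ∀ j ∈ (Finset.univ : Finset (Fin (t + 3))).erase k,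
        v k - v j = (fun i : ℕ => (((k : ℕ) : ℚ)) - i) (j : ℕ) := by
      intro j _
      simp only [hv]
      ring
    rw [Finset.prod_congr rfl hfn, fin_erase_prod (t + 3) k (fun i => (((k : ℕ) : ℚ)) - i),
      prod_sub (t + 3) (k : ℕ) hkM]
    norm_num
  have hweight : Lagrange.nodalWeight Finset.univ v k =
      ((-1 : ℚ) ^ (t + 2 - (k : ℕ)) * (k : ℕ).factorial * (t + 2 - (k : ℕ)).factorial)⁻¹ := by
    rw [Lagrange.nodalWeight, ← hwprod]
    first
    | exact Finset.prod_inv_distrib.symm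
    | exact Finset.prod_inv_distrib
    | exact Finset.prod_inv_distrib (f := fun j => v k - v j)
  rw [hbasis, Polynomial.coeff_C_mul, hweight, h0, h1]
  -- final arithmetic
  obtain ⟨e, he⟩ : ∃ e, t + 2 - (k : ℕ) = e := ⟨_, rfl⟩
  have hke : (k : ℕ) + e = t + 2 := by omega
  have hsub : t + 3 - ((k : ℕ) + 1) = e := by omega
  have hsign : (-1 : ℚ) ^ (t + 3 + ((k : ℕ) + 1)) = (-1 : ℚ) ^ e := by
    have : t + 3 + ((k : ℕ) + 1) = e + 2 * ((k : ℕ) + 1) := by omega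
    rw [this, pow_add, pow_mul]
    norm_num
  rw [he, hsub, hsign]
  have hkf : ((k : ℕ).factorial : ℚ) ≠ 0 := Nat.cast_ne_zero.mpr (Nat.factorial_ne_zero _)
  have hef : ((e.factorial : ℚ)) ≠ 0 := Nat.cast_ne_zero.mpr (Nat.factorial_ne_zero _)
  have hsig : ((-1 : ℚ) ^ e) ≠ 0 := pow_ne_zero _ (by norm_num)
  have hMc : ((t + 3 : ℕ) : ℚ) = (t : ℚ) + 3 := by push_cast; ring
  rw [hMc]
  have hneg : ((-1 : ℚ) ^ e)⁻¹ = (-1) ^ e := by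
    rw [← inv_pow, inv_neg, inv_one]
  rw [mul_inv, mul_inv, hneg]
  field_simp
  ring
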